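/- arXiv:2402.16186 — 6 statements merged into one kernel-verified Lean document; each statement's English description precedes it below -/
import Mathlib

section
/- Suppose v, s ∈ ℝ^{2n} have all components positive, τ > 0, and (Δz, Δv, Δs) is a Newton direction at (v, s, τ), i.e. it satisfies 2λH̃Δz + ΩΔv = 0, ΩᵀΔz + Δs = 0, and √(s/v)Δv + √(v/s)Δs = 2(τe − √(vs)). If the proximity measure satisfies ξ(√(vs), τ) = ‖τe − √(vs)‖/τ < 1, then the full Newton step is strictly feasible: every component of v + Δv is positive and every component of s + Δs is positive. -/
open Finset Matrix Real

/-- Euclidean norm of a real vector. -/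
noncomputable def enorm {m : Type*} [Fintype m] (x : m → ℝ) : ℝ :=
  Real.sqrt (∑ i, (x i) ^ 2)

/-- The matrix Ω = [I, −I] ∈ ℝ^{n × 2n}. -/
noncomputable def Omega (n : ℕ) : Matrix (Fin n) (Fin n ⊕ Fin n) ℝ :=
  Matrix.fromCols (1 : Matrix (Fin n) (Fin n) ℝ) (-(1 : Matrix (Fin n) (Fin n) ℝ))

/-- Strict feasibility of the full Newton step (Lemma 3). -/
theorem full_newton_step_strictly_feasible
    (n : ℕ) (hn : 1 ≤ n)
    (Htil : Matrix (Fin n) (Fin n) ℝ) (hH : Htil.PosSemidef)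
    (lam : ℝ) (hlam : 0 < lam)
    (v s : Fin n ⊕ Fin n → ℝ) (hv : ∀ i, 0 < v i) (hs : ∀ i, 0 < s i)
    (τ : ℝ) (hτ : 0 < τ)
    (Δz : Fin n → ℝ) (Δv Δs : Fin n ⊕ Fin n → ℝ)
    (heq1 : (2 * lam) • Htil.mulVec Δz + (Omega n).mulVec Δv = 0)
    (heq2 : (Omega n)ᵀ.mulVec Δz + Δs = 0)
    (heq3 : ∀ i, Real.sqrt (s i / v i) * Δv i + Real.sqrt (v i / s i) * Δs i
              = 2 * (τ - Real.sqrt (v i * s i)))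
    (hxi : _root_.enorm (fun i => τ - Real.sqrt (v i * s i)) / τ < 1) :
    (∀ i, 0 < v i + Δv i) ∧ (∀ i, 0 < s i + Δs i) := by
  set β : Fin n ⊕ Fin n → ℝ := fun i => Real.sqrt (v i * s i) with hβ
  set p : Fin n ⊕ Fin n → ℝ := fun i => Real.sqrt (s i / v i) * Δv i with hp
  set q : Fin n ⊕ Fin n → ℝ := fun i => Real.sqrt (v i / s i) * Δs i with hq
  have hβpos : ∀ i, 0 < β i := fun i => Real.sqrt_pos.2 (mul_pos (hv i) (hs i))
  have hdpos : ∀ i, 0 < Real.sqrt (v i / s i) :=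
    fun i => Real.sqrt_pos.2 (div_pos (hv i) (hs i))
  have hdpos' : ∀ i, 0 < Real.sqrt (s i / v i) :=
    fun i => Real.sqrt_pos.2 (div_pos (hs i) (hv i))
  have hmul1 : ∀ i, Real.sqrt (s i / v i) * Real.sqrt (v i / s i) = 1 := by
    intro i
    rw [← Real.sqrt_mul (div_pos (hs i) (hv i)).le]
    have : s i / v i * (v i / s i) = 1 := by
      rw [div_mul_div_comm, mul_comm (s i) (v i)]
      exact div_self (mul_pos (hv i) (hs i)).ne'
    rw [this, Real.sqrt_one]
  have hpq : ∀ i, p i * q i = Δv i * Δs i := by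
    intro i
    simp only [hp, hq]
    linear_combination (Δv i * Δs i) * hmul1 i
  have hsum : ∀ i, p i + q i = 2 * (τ - β i) := heq3
  -- dot product nonneg
  have hΔs : Δs = -((Omega n)ᵀ.mulVec Δz) := by
    have := heq2
    funext i
    have h := congrFun heq2 i
    simp at h ⊢
    linarith
  have hΩv : (Omega n).mulVec Δv = -((2 * lam) • Htil.mulVec Δz) := by
    funext i
    have h := congrFun heq1 i
    simp at h ⊢
    linarith
  have hdot : 0 ≤ ∑ i, Δv i * Δs i := by
    have h1 : ∑ i, Δv i * Δs i = Δv ⬝ᵥ Δs := rfl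
    rw [h1, hΔs, dotProduct_neg, Matrix.dotProduct_mulVec,
      Matrix.vecMul_transpose, hΩv]
    have h2 : 0 ≤ Δz ⬝ᵥ Htil.mulVec Δz := by
      have := hH.dotProduct_mulVec_nonneg Δz
      simpa using this
    have h3 : (-((2 * lam) • Htil.mulVec Δz)) ⬝ᵥ Δz
        = -((2 * lam) * (Htil.mulVec Δz ⬝ᵥ Δz)) := by
      simp [neg_dotProduct, smul_dotProduct, smul_eq_mul]
    rw [h3]
    have h4 : Htil.mulVec Δz ⬝ᵥ Δz = Δz ⬝ᵥ Htil.mulVec Δz := dotProduct_comm _ _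
    nlinarith
  -- norm bound
  have hnorm : ∑ i, (τ - β i) ^ 2 < τ ^ 2 := by
    have h1 : _root_.enorm (fun i => τ - β i) < τ := by
      have := (div_lt_one hτ).mp hxi
      exact this
    have h2 : Real.sqrt (∑ i, (τ - β i) ^ 2) < τ := h1
    have h3 : 0 ≤ ∑ i, (τ - β i) ^ 2 := Finset.sum_nonneg fun i _ => sq_nonneg _
    nlinarith [Real.sq_sqrt h3, Real.sqrt_nonneg (∑ i, (τ - β i) ^ 2)]
  have key : ∑ j, ((p j - q j) / 2) ^ 2 + ∑ j, (Δv j * Δs j)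
      = ∑ j, ((p j + q j) / 2) ^ 2 := by
    rw [← Finset.sum_add_distrib]
    apply Finset.sum_congr rfl
    intro j _
    rw [← hpq j]
    ring
  have key2 : ∑ j, ((p j + q j) / 2) ^ 2 = ∑ j, (τ - β j) ^ 2 := by
    apply Finset.sum_congr rfl
    intro j _
    rw [hsum j]
    ring
  have hpmq : ∀ i, ((p i - q i) / 2) ^ 2 < τ ^ 2 := by
    intro i
    have h1 : ((p i - q i) / 2) ^ 2 ≤ ∑ j, ((p j - q j) / 2) ^ 2 :=
      Finset.single_le_sum (f := fun j => ((p j - q j) / 2) ^ 2)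
        (fun j _ => sq_nonneg _) (Finset.mem_univ i)
    nlinarith [key, key2, hnorm, hdot]
  have hkey : ∀ i, 0 < β i + p i ∧ 0 < β i + q i := by
    intro i
    have hprod : (β i + p i) * (β i + q i) = τ ^ 2 - ((p i - q i) / 2) ^ 2 := by
      have h := hsum i
      nlinarith [h]
    have hprodpos : 0 < (β i + p i) * (β i + q i) := by
      rw [hprod]; nlinarith [hpmq i]
    have hs2 : (β i + p i) + (β i + q i) = 2 * τ := by
      have h := hsum i; linarith
    constructor <;> nlinarith [hprodpos, hs2, hτ]
  constructor
  · intro i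
    have h1 : v i + Δv i = Real.sqrt (v i / s i) * (β i + p i) := by
      have hvβ : Real.sqrt (v i / s i) * β i = v i := by
        rw [hβ, ← Real.sqrt_mul (div_pos (hv i) (hs i)).le]
        have : v i / s i * (v i * s i) = (v i) ^ 2 := by
          rw [div_mul_eq_mul_div, show v i * (v i * s i) = (v i) ^ 2 * s i by ring,
            mul_div_cancel_right₀ _ (hs i).ne']
        rw [this, Real.sqrt_sq (hv i).le]
      have hvp : Real.sqrt (v i / s i) * p i = Δv i := by
        simp only [hp]
        rw [← mul_assoc, mul_comm (Real.sqrt (v i / s i)) (Real.sqrt (s i / v i)),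
          hmul1 i, one_mul]
      rw [mul_add, hvβ, hvp]
    rw [h1]
    exact mul_pos (hdpos i) (hkey i).1
  · intro i
    have h1 : s i + Δs i = Real.sqrt (s i / v i) * (β i + q i) := by
      have hsβ : Real.sqrt (s i / v i) * β i = s i := by
        rw [hβ, ← Real.sqrt_mul (div_pos (hs i) (hv i)).le]
        have : s i / v i * (v i * s i) = (s i) ^ 2 := by
          rw [div_mul_eq_mul_div, show s i * (v i * s i) = (s i) ^ 2 * v i by ring,
            mul_div_cancel_right₀ _ (hv i).ne']
        rw [this, Real.sqrt_sq (hs i).le]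
      have hsq : Real.sqrt (s i / v i) * q i = Δs i := by
        simp only [hq]
        rw [← mul_assoc, hmul1 i, one_mul]
      rw [mul_add, hsβ, hsq]
    rw [h1]
    exact mul_pos (hdpos' i) (hkey i).2
end

section
/- Suppose v, s ∈ ℝ^{2n} have all components positive, τ > 0, and (Δz, Δv, Δs) is a Newton direction at (v, s, τ), i.e. it satisfies 2λH̃Δz + ΩΔv = 0, ΩᵀΔz + Δs = 0, and √(s/v)Δv + √(v/s)Δs = 2(τe − √(vs)). Then after the full Newton step v₊ = v + Δv, s₊ = s + Δs, the duality gap satisfies v₊ᵀ s₊ ≤ (2n) τ². -/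
open Finset Matrix Real

/-- Duality gap after a full Newton step (Lemma 4): v₊ᵀ s₊ ≤ (2n) τ². -/
theorem duality_gap_after_full_newton_step
    (n : ℕ) (hn : 1 ≤ n)
    (Htil : Matrix (Fin n) (Fin n) ℝ) (hH : Htil.PosSemidef)
    (lam : ℝ) (hlam : 0 < lam)
    (v s : Fin n ⊕ Fin n → ℝ) (hv : ∀ i, 0 < v i) (hs : ∀ i, 0 < s i)
    (τ : ℝ) (hτ : 0 < τ)
    (Δz : Fin n → ℝ) (Δv Δs : Fin n ⊕ Fin n → ℝ)
    (heq1 : (2 * lam) • Htil.mulVec Δz + (Omega n).mulVec Δv = 0)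
    (heq2 : (Omega n)ᵀ.mulVec Δz + Δs = 0)
    (heq3 : ∀ i, Real.sqrt (s i / v i) * Δv i + Real.sqrt (v i / s i) * Δs i
              = 2 * (τ - Real.sqrt (v i * s i))) :
    ∑ i, (v i + Δv i) * (s i + Δs i) ≤ (2 * n) * τ ^ 2 := by
  have key : ∀ i, (v i + Δv i) * (s i + Δs i) ≤ τ ^ 2 := by
    intro i
    set p := v i with hp
    set q := s i with hq
    have hp0 : 0 < p := hv i
    have hq0 : 0 < q := hs i
    set r := Real.sqrt (p * q) with hr
    set a := Real.sqrt (q / p) * Δv i with ha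
    set b := Real.sqrt (p / q) * Δs i with hb
    have hab : a + b = 2 * (τ - r) := heq3 i
    have hr2 : r ^ 2 = p * q := Real.sq_sqrt (by positivity)
    -- r * a = q * Δv i
    have h1 : r * a = q * Δv i := by
      have : Real.sqrt (p * q) * Real.sqrt (q / p) = q := by
        rw [← Real.sqrt_mul (by positivity)]
        have : p * q * (q / p) = q ^ 2 := by field_simp
        rw [this, Real.sqrt_sq hq0.le]
      rw [ha, hr, ← mul_assoc, this]
    -- r * b = p * Δs i
    have h2 : r * b = p * Δs i := by
      have : Real.sqrt (p * q) * Real.sqrt (p / q) = p := by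
        rw [← Real.sqrt_mul (by positivity)]
        have : p * q * (p / q) = p ^ 2 := by field_simp
        rw [this, Real.sqrt_sq hp0.le]
      rw [hb, hr, ← mul_assoc, this]
    -- a * b = Δv i * Δs i
    have h3 : a * b = Δv i * Δs i := by
      have : Real.sqrt (q / p) * Real.sqrt (p / q) = 1 := by
        rw [← Real.sqrt_mul (by positivity)]
        have : q / p * (p / q) = 1 := by field_simp
        rw [this, Real.sqrt_one]
      rw [ha, hb]
      calc Real.sqrt (q / p) * Δv i * (Real.sqrt (p / q) * Δs i)
          = Real.sqrt (q / p) * Real.sqrt (p / q) * (Δv i * Δs i) := by ring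
        _ = Δv i * Δs i := by rw [this, one_mul]
    have expand : (p + Δv i) * (q + Δs i)
        = r ^ 2 + (r * a + r * b) + a * b := by
      rw [hr2, h1, h2, h3]; ring
    rw [expand]
    nlinarith [sq_nonneg (a - b), hab]
  calc ∑ i, (v i + Δv i) * (s i + Δs i) ≤ ∑ _i : Fin n ⊕ Fin n, τ ^ 2 :=
        Finset.sum_le_sum fun i _ => key i
    _ = (2 * n) * τ ^ 2 := by
        rw [Finset.sum_const, Finset.card_univ, Fintype.card_sum, Fintype.card_fin,
          nsmul_eq_mul]
        push_cast; ring
end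

section
/- Suppose v, s ∈ ℝ^{2n} have all components positive, τ > 0, and (Δz, Δv, Δs) is a Newton direction at (v, s, τ). Let v₊ = v + Δv, s₊ = s + Δs, β₊ = √(v₊s₊), and let τ₊ = (1 − η)τ with 0 < η < 1. If ξ := ξ(√(vs), τ) < 1, then the updated proximity measure satisfies ξ(β₊, τ₊) ≤ ξ²/(1 + √(1 − ξ²)) + η√(2n)/(1 − η). -/
open Finset Matrix Real

lemma scalar_key (N A w η τ : ℝ) (hτ : 0 < τ) (hη0 : 0 < η) (hη1 : η < 1)
    (hN0 : 0 ≤ N) (hNA : N ≤ A) (hA0 : 0 ≤ A) (hAτ : A ≤ τ) (hw0 : 0 ≤ w) :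
    N ^ 2 - 2 * η * τ * N + w ^ 2 * (η ^ 2 * τ ^ 2) ≤ ((1 - η) * A + η * τ * w) ^ 2 := by
  have h1η : (0:ℝ) < 1 - η := by linarith
  rcases le_or_gt (N + A) (2 * η * τ) with hcase | hcase
  · nlinarith [mul_nonneg (mul_nonneg hη0.le hτ.le) hw0, sq_nonneg ((1 - η) * A),
      mul_nonneg (mul_nonneg (mul_nonneg h1η.le hA0) (mul_nonneg hη0.le hτ.le)) hw0,
      mul_nonneg hN0 (by linarith : 0 ≤ 2 * η * τ - N)]
  · nlinarith [mul_nonneg (mul_nonneg (mul_nonneg hη0.le (by linarith : (0:ℝ) ≤ 2 - η)) hA0)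
        (by linarith : 0 ≤ τ - A),
      mul_nonneg (mul_nonneg (mul_nonneg hη0.le hη0.le) hτ.le) hA0,
      mul_nonneg (mul_nonneg (mul_nonneg (mul_nonneg h1η.le hA0) hη0.le) hτ.le) hw0,
      mul_nonneg (by linarith : 0 ≤ A - N) (by linarith : 0 ≤ N + A - 2 * η * τ)]

lemma newton_core {ι : Type*} [Fintype ι] (τ η ξ : ℝ)
    (hτ : 0 < τ) (hη0 : 0 < η) (hη1 : η < 1) (hξ0 : 0 ≤ ξ) (hξ : ξ < 1)
    (M : ι → ℝ) (hM : ∑ i, M i ^ 2 ≤ ξ ^ 2 * τ ^ 2) :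
    Real.sqrt (∑ i, ((1 - η) * τ - Real.sqrt (τ ^ 2 - M i ^ 2)) ^ 2) / ((1 - η) * τ)
      ≤ ξ ^ 2 / (1 + Real.sqrt (1 - ξ ^ 2))
        + η * Real.sqrt (Fintype.card ι) / (1 - η) := by
  have hξ2 : ξ ^ 2 < 1 := by nlinarith
  set c : ℝ := Real.sqrt (1 - ξ ^ 2) with hc
  have hc2 : c ^ 2 = 1 - ξ ^ 2 := Real.sq_sqrt (by linarith)
  have hc0 : 0 < c := Real.sqrt_pos.2 (by linarith)
  have hc1 : c ≤ 1 := by nlinarith [hc0.le]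
  clear_value c
  set A : ℝ := τ * ξ ^ 2 / (1 + c) with hA
  clear_value A
  have h1c : (0:ℝ) < 1 + c := by linarith
  have hA0 : 0 ≤ A := by rw [hA]; positivity
  have hAτ : A ≤ τ := by
    rw [hA, div_le_iff₀ h1c]; nlinarith
  -- pointwise bounds
  have hMi : ∀ i : ι, M i ^ 2 ≤ ξ ^ 2 * τ ^ 2 := by
    intro i
    calc M i ^ 2 ≤ ∑ j, M j ^ 2 :=
          Finset.single_le_sum (f := fun j => M j ^ 2) (fun j _ => sq_nonneg _) (Finset.mem_univ i)
      _ ≤ ξ ^ 2 * τ ^ 2 := hM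
  have hbpos : ∀ i : ι, τ * c ≤ Real.sqrt (τ ^ 2 - M i ^ 2) := by
    intro i
    have : (τ * c) ^ 2 ≤ τ ^ 2 - M i ^ 2 := by nlinarith [hMi i]
    calc τ * c = Real.sqrt ((τ * c) ^ 2) := (Real.sqrt_sq (by positivity)).symm
      _ ≤ _ := Real.sqrt_le_sqrt this
  have hble : ∀ i : ι, Real.sqrt (τ ^ 2 - M i ^ 2) ≤ τ := by
    intro i
    calc Real.sqrt (τ ^ 2 - M i ^ 2) ≤ Real.sqrt (τ ^ 2) :=
          Real.sqrt_le_sqrt (by nlinarith [sq_nonneg (M i)])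
      _ = τ := Real.sqrt_sq hτ.le
  have hub : ∀ i : ι, τ - Real.sqrt (τ ^ 2 - M i ^ 2) ≤ M i ^ 2 / (τ * (1 + c)) := by
    intro i
    have hb2 : (Real.sqrt (τ ^ 2 - M i ^ 2)) ^ 2 = τ ^ 2 - M i ^ 2 :=
      Real.sq_sqrt (by nlinarith [hMi i, mul_pos hτ hc0, hbpos i])
    rw [le_div_iff₀ (by positivity)]
    nlinarith [hbpos i, hble i, hb2]
  -- sums
  set Nsq : ℝ := ∑ i, (τ - Real.sqrt (τ ^ 2 - M i ^ 2)) ^ 2 with hNsq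
  set S : ℝ := ∑ i, (τ - Real.sqrt (τ ^ 2 - M i ^ 2)) with hS
  have hS0 : 0 ≤ S := Finset.sum_nonneg fun i _ => by linarith [hble i]
  have hNsq0 : 0 ≤ Nsq := Finset.sum_nonneg fun i _ => sq_nonneg _
  have hNsqS : Nsq ≤ S ^ 2 :=
    Finset.sum_sq_le_sq_sum_of_nonneg (fun i _ => by linarith [hble i])
  have hNsqA : Nsq ≤ A ^ 2 := by
    have h4 : ∑ i, (M i ^ 2) ^ 2 ≤ (∑ i, M i ^ 2) ^ 2 :=
      Finset.sum_sq_le_sq_sum_of_nonneg (fun i _ => sq_nonneg _)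
    have hQ0 : 0 ≤ ∑ i, M i ^ 2 := Finset.sum_nonneg fun i _ => sq_nonneg _
    have step : Nsq ≤ (∑ i, (M i ^ 2) ^ 2) / (τ * (1 + c)) ^ 2 := by
      rw [hNsq, Finset.sum_div]
      refine Finset.sum_le_sum fun i _ => ?_
      have h1 := hub i
      have h2 : 0 ≤ τ - Real.sqrt (τ ^ 2 - M i ^ 2) := by linarith [hble i]
      calc (τ - Real.sqrt (τ ^ 2 - M i ^ 2)) ^ 2 ≤ (M i ^ 2 / (τ * (1 + c))) ^ 2 := by
            apply pow_le_pow_left₀ h2 h1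
        _ = (M i ^ 2) ^ 2 / (τ * (1 + c)) ^ 2 := by rw [div_pow]
    have h5 : (∑ i, M i ^ 2) ^ 2 ≤ (ξ ^ 2 * τ ^ 2) ^ 2 := pow_le_pow_left₀ hQ0 hM 2
    have hA2 : A ^ 2 = (ξ ^ 2 * τ ^ 2) ^ 2 / (τ * (1 + c)) ^ 2 := by
      rw [hA]; field_simp
    rw [hA2]
    calc Nsq ≤ (∑ i, (M i ^ 2) ^ 2) / (τ * (1 + c)) ^ 2 := step
      _ ≤ (ξ ^ 2 * τ ^ 2) ^ 2 / (τ * (1 + c)) ^ 2 := by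
          exact div_le_div_of_nonneg_right (h4.trans h5) (by positivity)
  -- final chain
  clear_value Nsq S
  set N : ℝ := Real.sqrt Nsq with hN
  have hN0 : 0 ≤ N := Real.sqrt_nonneg _
  have hN2 : N ^ 2 = Nsq := Real.sq_sqrt hNsq0
  have hNA : N ≤ A := by
    rw [hN]
    calc Real.sqrt Nsq ≤ Real.sqrt (A ^ 2) := Real.sqrt_le_sqrt hNsqA
      _ = A := Real.sqrt_sq hA0
  have hNS : N ≤ S := by
    rw [hN]
    calc Real.sqrt Nsq ≤ Real.sqrt (S ^ 2) := Real.sqrt_le_sqrt hNsqS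
      _ = S := Real.sqrt_sq hS0
  set w : ℝ := Real.sqrt (Fintype.card ι) with hw
  have hw0 : 0 ≤ w := Real.sqrt_nonneg _
  have hw2 : w ^ 2 = (Fintype.card ι : ℝ) := Real.sq_sqrt (Nat.cast_nonneg _)
  clear_value w
  have hexp : ∑ i, ((1 - η) * τ - Real.sqrt (τ ^ 2 - M i ^ 2)) ^ 2
      = Nsq - 2 * η * τ * S + (Fintype.card ι : ℝ) * (η ^ 2 * τ ^ 2) := by
    calc ∑ i, ((1 - η) * τ - Real.sqrt (τ ^ 2 - M i ^ 2)) ^ 2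
        = ∑ i, ((τ - Real.sqrt (τ ^ 2 - M i ^ 2)) ^ 2
            - 2 * η * τ * (τ - Real.sqrt (τ ^ 2 - M i ^ 2)) + η ^ 2 * τ ^ 2) :=
          Finset.sum_congr rfl (fun i _ => by ring)
      _ = Nsq - 2 * η * τ * S + (Fintype.card ι : ℝ) * (η ^ 2 * τ ^ 2) := by
          rw [Finset.sum_add_distrib, Finset.sum_sub_distrib, ← Finset.mul_sum,
            Finset.sum_const, Finset.card_univ, nsmul_eq_mul, hNsq, hS]
  set R : ℝ := (1 - η) * A + η * τ * w with hR
  clear_value R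
  have h1η : (0:ℝ) < 1 - η := by linarith
  have hR0 : 0 ≤ R := by
    rw [hR]
    exact add_nonneg (mul_nonneg h1η.le hA0) (mul_nonneg (mul_nonneg hη0.le hτ.le) hw0)
  have hscalar : Nsq - 2 * η * τ * S + (Fintype.card ι : ℝ) * (η ^ 2 * τ ^ 2) ≤ R ^ 2 := by
    rw [← hw2, hR]
    have hstep : Nsq - 2 * η * τ * S ≤ N ^ 2 - 2 * η * τ * N := by
      have := mul_le_mul_of_nonneg_left hNS (by positivity : (0:ℝ) ≤ 2 * η * τ)
      linarith [hN2]
    have key := scalar_key N A w η τ hτ hη0 hη1 hN0 hNA hA0 hAτ hw0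
    linarith [hstep, key]
  have hfin : Real.sqrt (∑ i, ((1 - η) * τ - Real.sqrt (τ ^ 2 - M i ^ 2)) ^ 2) ≤ R := by
    rw [hexp]
    calc Real.sqrt (Nsq - 2 * η * τ * S + (Fintype.card ι : ℝ) * (η ^ 2 * τ ^ 2))
        ≤ Real.sqrt (R ^ 2) := Real.sqrt_le_sqrt hscalar
      _ = R := Real.sqrt_sq hR0
  have hRHS : ξ ^ 2 / (1 + c) + η * w / (1 - η) = R / ((1 - η) * τ) := by
    rw [hR, hA]
    field_simp
  rw [hRHS]
  exact div_le_div_of_nonneg_right hfin (mul_pos h1η hτ).le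

lemma alg1 (a b B dv ds τ V S : ℝ) (hab : a*b = 1) (hV : V = B*b) (hS : S = B*a)
    (h : a*dv + b*ds = 2*(τ - B)) :
    (V + dv)*(S + ds) = τ^2 - ((a*dv - b*ds)/2)^2 := by
  subst hV hS
  linear_combination (B^2 - dv*ds) * hab + ((B + (a*dv + b*ds)/2 + τ)/2) * h

lemma alg2 (a b dv ds τ B : ℝ) (hab : a*b = 1) (h : a*dv + b*ds = 2*(τ-B)) :
    ((a*dv - b*ds)/2)^2 = (τ-B)^2 - dv*ds := by
  linear_combination ((a*dv + b*ds + 2*(τ-B))/4) * h - dv*ds*hab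


/-- Decrease of the proximity measure after a full Newton step and an update
    τ₊ = (1 − η)τ (Lemma 5):
    ξ(β₊, τ₊) ≤ ξ²/(1 + √(1 − ξ²)) + η√(2n)/(1 − η). -/
theorem proximity_measure_after_full_newton_step
    (n : ℕ) (hn : 1 ≤ n)
    (Htil : Matrix (Fin n) (Fin n) ℝ) (hH : Htil.PosSemidef)
    (lam : ℝ) (hlam : 0 < lam)
    (v s : Fin n ⊕ Fin n → ℝ) (hv : ∀ i, 0 < v i) (hs : ∀ i, 0 < s i)
    (τ : ℝ) (hτ : 0 < τ)
    (Δz : Fin n → ℝ) (Δv Δs : Fin n ⊕ Fin n → ℝ)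
    (heq1 : (2 * lam) • Htil.mulVec Δz + (Omega n).mulVec Δv = 0)
    (heq2 : (Omega n)ᵀ.mulVec Δz + Δs = 0)
    (heq3 : ∀ i, Real.sqrt (s i / v i) * Δv i + Real.sqrt (v i / s i) * Δs i
              = 2 * (τ - Real.sqrt (v i * s i)))
    (η : ℝ) (hη0 : 0 < η) (hη1 : η < 1)
    (ξ : ℝ) (hξdef : ξ = _root_.enorm (fun i => τ - Real.sqrt (v i * s i)) / τ)
    (hξ : ξ < 1) :
    _root_.enorm (fun i => (1 - η) * τ - Real.sqrt ((v i + Δv i) * (s i + Δs i)))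
        / ((1 - η) * τ)
      ≤ ξ ^ 2 / (1 + Real.sqrt (1 - ξ ^ 2))
        + η * Real.sqrt (2 * n) / (1 - η) := by
  have hξ0 : 0 ≤ ξ := by rw [hξdef, _root_.enorm]; positivity
  -- ∑ (τ - β i)² = ξ²τ²
  have hsum0 : 0 ≤ ∑ i, (τ - Real.sqrt (v i * s i)) ^ 2 :=
    Finset.sum_nonneg fun i _ => sq_nonneg _
  have hξτ : ξ * τ = Real.sqrt (∑ i, (τ - Real.sqrt (v i * s i)) ^ 2) := by
    rw [hξdef, _root_.enorm]; field_simp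
  have hSig : ∑ i, (τ - Real.sqrt (v i * s i)) ^ 2 = ξ ^ 2 * τ ^ 2 := by
    have h := Real.sq_sqrt hsum0
    rw [← hξτ] at h
    rw [← h]; ring
  -- pointwise sqrt algebra
  have hab : ∀ i, Real.sqrt (s i / v i) * Real.sqrt (v i / s i) = 1 := by
    intro i
    rw [← Real.sqrt_mul (div_pos (hs i) (hv i)).le,
      show s i / v i * (v i / s i) = 1 by
        rw [div_mul_div_comm, mul_comm (s i) (v i)]
        exact div_self (mul_pos (hv i) (hs i)).ne', Real.sqrt_one]
  have hBa : ∀ i, Real.sqrt (v i * s i) * Real.sqrt (s i / v i) = s i := by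
    intro i
    rw [← Real.sqrt_mul (mul_pos (hv i) (hs i)).le,
      show v i * s i * (s i / v i) = s i ^ 2 by
        have hvne : v i ≠ 0 := (hv i).ne'
        field_simp, Real.sqrt_sq (hs i).le]
  have hBb : ∀ i, Real.sqrt (v i * s i) * Real.sqrt (v i / s i) = v i := by
    intro i
    rw [← Real.sqrt_mul (mul_pos (hv i) (hs i)).le,
      show v i * s i * (v i / s i) = v i ^ 2 by
        have hsne : s i ≠ 0 := (hs i).ne'
        field_simp, Real.sqrt_sq (hv i).le]
  have hprod : ∀ i, (v i + Δv i) * (s i + Δs i)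
      = τ ^ 2 - ((Real.sqrt (s i / v i) * Δv i - Real.sqrt (v i / s i) * Δs i) / 2) ^ 2 :=
    fun i => alg1 _ _ _ _ _ _ _ _ (hab i) (hBb i).symm (hBa i).symm (heq3 i)
  have hM2 : ∀ i, ((Real.sqrt (s i / v i) * Δv i - Real.sqrt (v i / s i) * Δs i) / 2) ^ 2
      = (τ - Real.sqrt (v i * s i)) ^ 2 - Δv i * Δs i :=
    fun i => alg2 _ _ _ _ _ _ (hab i) (heq3 i)
  -- orthogonality
  have hΔs : Δs = -((Omega n)ᵀ.mulVec Δz) := eq_neg_of_add_eq_zero_right heq2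
  have hΩv : (Omega n).mulVec Δv = -((2 * lam) • Htil.mulVec Δz) :=
    eq_neg_of_add_eq_zero_right heq1
  have horth : 0 ≤ ∑ i, Δv i * Δs i := by
    have hc : ∑ i, Δv i * Δs i = (2 * lam) * (Δz ⬝ᵥ Htil.mulVec Δz) := by
      calc ∑ i, Δv i * Δs i = Δv ⬝ᵥ Δs := rfl
        _ = -(Δv ⬝ᵥ ((Omega n)ᵀ.mulVec Δz)) := by rw [hΔs, dotProduct_neg]
        _ = -(((Omega n).mulVec Δv) ⬝ᵥ Δz) := by
            rw [Matrix.dotProduct_mulVec, Matrix.vecMul_transpose]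
        _ = (2 * lam) * ((Htil.mulVec Δz) ⬝ᵥ Δz) := by
            rw [hΩv, neg_dotProduct, smul_dotProduct, neg_neg, smul_eq_mul]
        _ = (2 * lam) * (Δz ⬝ᵥ Htil.mulVec Δz) := by rw [dotProduct_comm]
    rw [hc]
    have := hH.dotProduct_mulVec_nonneg Δz
    rw [star_trivial] at this
    exact mul_nonneg (by linarith) this
  -- sum bound for M
  have hM : ∑ i, ((Real.sqrt (s i / v i) * Δv i - Real.sqrt (v i / s i) * Δs i) / 2) ^ 2
      ≤ ξ ^ 2 * τ ^ 2 := by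
    calc ∑ i, ((Real.sqrt (s i / v i) * Δv i - Real.sqrt (v i / s i) * Δs i) / 2) ^ 2
        = ∑ i, ((τ - Real.sqrt (v i * s i)) ^ 2 - Δv i * Δs i) :=
          Finset.sum_congr rfl fun i _ => hM2 i
      _ = (∑ i, (τ - Real.sqrt (v i * s i)) ^ 2) - ∑ i, Δv i * Δs i :=
          Finset.sum_sub_distrib _ _
      _ ≤ ∑ i, (τ - Real.sqrt (v i * s i)) ^ 2 := by linarith
      _ = ξ ^ 2 * τ ^ 2 := hSig
  have main := newton_core (ι := Fin n ⊕ Fin n) τ η ξ hτ hη0 hη1 hξ0 hξ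
    (fun i => (Real.sqrt (s i / v i) * Δv i - Real.sqrt (v i / s i) * Δs i) / 2) hM
  have hcard : ((Fintype.card (Fin n ⊕ Fin n) : ℕ) : ℝ) = 2 * (n : ℝ) := by
    simp [Fintype.card_sum]; ring
  rw [hcard] at main
  rw [_root_.enorm, show (∑ i, ((1 - η) * τ - Real.sqrt ((v i + Δv i) * (s i + Δs i))) ^ 2)
      = ∑ i, ((1 - η) * τ - Real.sqrt (τ ^ 2
        - ((Real.sqrt (s i / v i) * Δv i - Real.sqrt (v i / s i) * Δs i) / 2) ^ 2)) ^ 2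
      from Finset.sum_congr rfl fun i _ => by rw [hprod i]]
  exact main
end

section
/- Suppose v, s ∈ ℝ^{2n} have all components positive, τ > 0, and (Δz, Δv, Δs) is a Newton direction at (v, s, τ). Let v₊ = v + Δv, s₊ = s + Δs, β₊ = √(v₊s₊), and τ₊ = (1 − η)τ. If ξ(√(vs), τ) ≤ 1/√2 and η = (√2 − 1)/(√(2n) + √2 − 1), then ξ(β₊, τ₊) ≤ 1/√2. -/
open Finset Matrix Real

/-- Euclidean norm of a real vector. -/
noncomputable def euclNorm {m : Type*} [Fintype m] (x : m → ℝ) : ℝ :=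
  Real.sqrt (∑ i, (x i) ^ 2)

lemma chord_bound (τ q x : ℝ) (hτ : 0 < τ) (hq : 0 < q) (hx0 : 0 ≤ x) (hx2 : x ≤ 2*τ^2) :
    (q*τ - Real.sqrt (τ^2 - x/4))^2
      ≤ (1-q)^2*τ^2 + (q*((2 - Real.sqrt 2)/2) - 1/4)*x := by
  have h2 : Real.sqrt 2 ^ 2 = 2 := Real.sq_sqrt (by norm_num)
  have h2pos : 0 < Real.sqrt 2 := Real.sqrt_pos.mpr (by norm_num)
  have h2lt : Real.sqrt 2 < 3/2 := by nlinarith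
  have h2gt : 1 < Real.sqrt 2 := by nlinarith
  set k : ℝ := (2 - Real.sqrt 2)/2 with hk
  have hk1 : k - 1/4 = k^2/2 := by rw [hk]; nlinarith
  have hy : 0 ≤ τ^2 - x/4 := by nlinarith
  set r : ℝ := Real.sqrt (τ^2 - x/4) with hr
  have hr0 : 0 ≤ r := Real.sqrt_nonneg _
  have hr2 : r^2 = τ^2 - x/4 := Real.sq_sqrt hy
  have hchord : 2*τ^2 - k*x ≤ 2*τ*r := by
    have hkpos : 0 < k := by rw [hk]; nlinarith
    have hl : 0 < 2*τ^2 - k*x := by nlinarith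
    have hsq : (2*τ^2 - k*x)^2 ≤ (2*τ*r)^2 := by
      have h1 : (2*τ*r)^2 = 4*τ^2*(τ^2 - x/4) := by rw [mul_pow, mul_pow, hr2]; ring
      have key : 4*τ^2*(τ^2-x/4) - (2*τ^2-k*x)^2 = k^2*x*(2*τ^2-x) := by
        linear_combination (4*τ^2*x) * hk1
      nlinarith [mul_nonneg (mul_nonneg (sq_nonneg k) hx0) (sub_nonneg.mpr hx2)]
    nlinarith [mul_nonneg (mul_nonneg (by norm_num : (0:ℝ) ≤ 2) hτ.le) hr0]
  nlinarith [mul_le_mul_of_nonneg_left hchord hq.le]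


lemma scalar_case1 (a c : ℝ) (ha : 0 < a) (hcc : c^2 ≤ 1/2) :
    a^2*c^2 ≤ a^2/2 := by nlinarith [sq_nonneg a]

lemma scalar_case2 (a c : ℝ) (ha : 0 < a) (hc : 0 < c) (hc1 : c < 1) :
    a^2*c^2 + 2*((1-c)/2)*a*(a+c) - (a+c)^2/2 ≤ a^2/2 := by
  nlinarith [mul_nonneg (mul_nonneg (sq_nonneg a) hc.le) (sub_nonneg.mpr hc1.le),
    mul_nonneg (mul_nonneg ha.le hc.le) hc.le, sq_nonneg c]

set_option maxHeartbeats 1000000 in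
/-- Invariance of the neighborhood ξ ≤ 1/√2 under a full Newton step with
    η = (√2 − 1)/(√(2n) + √2 − 1) (Lemma 5, second part). -/
theorem proximity_measure_invariant
    (n : ℕ) (hn : 1 ≤ n)
    (Htil : Matrix (Fin n) (Fin n) ℝ) (hH : Htil.PosSemidef)
    (lam : ℝ) (hlam : 0 < lam)
    (v s : Fin n ⊕ Fin n → ℝ) (hv : ∀ i, 0 < v i) (hs : ∀ i, 0 < s i)
    (τ : ℝ) (hτ : 0 < τ)
    (Δz : Fin n → ℝ) (Δv Δs : Fin n ⊕ Fin n → ℝ)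
    (heq1 : (2 * lam) • Htil.mulVec Δz + (Omega n).mulVec Δv = 0)
    (heq2 : (Omega n)ᵀ.mulVec Δz + Δs = 0)
    (heq3 : ∀ i, Real.sqrt (s i / v i) * Δv i + Real.sqrt (v i / s i) * Δs i
              = 2 * (τ - Real.sqrt (v i * s i)))
    (η : ℝ) (hη : η = (Real.sqrt 2 - 1) / (Real.sqrt (2 * n) + Real.sqrt 2 - 1))
    (hξ : euclNorm (fun i => τ - Real.sqrt (v i * s i)) / τ ≤ 1 / Real.sqrt 2) :
    euclNorm (fun i => (1 - η) * τ - Real.sqrt ((v i + Δv i) * (s i + Δs i)))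
        / ((1 - η) * τ) ≤ 1 / Real.sqrt 2 := by
  -- basic constants
  have h2 : Real.sqrt 2 ^ 2 = 2 := Real.sq_sqrt (by norm_num)
  have h2pos : 0 < Real.sqrt 2 := Real.sqrt_pos.mpr (by norm_num)
  have h2lt : Real.sqrt 2 < 3/2 := by nlinarith
  have h2gt : 5/4 < Real.sqrt 2 := by nlinarith
  set c : ℝ := Real.sqrt 2 - 1 with hc_def
  have hc : 0 < c := by rw [hc_def]; linarith
  have hc1 : c < 1 := by rw [hc_def]; linarith
  set a : ℝ := Real.sqrt (2 * n) with ha_def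
  have hn1 : (1:ℝ) ≤ (n:ℝ) := by exact_mod_cast hn
  have ha : 0 < a := Real.sqrt_pos.mpr (by positivity)
  have h2n : a^2 = 2*n := Real.sq_sqrt (by positivity)
  have hac : 0 < a + c := by linarith
  have hηac : η * (a + c) = c := by
    rw [hη]
    have : Real.sqrt (2*↑n) + Real.sqrt 2 - 1 = a + c := by rw [ha_def, hc_def]; ring
    rw [this]; field_simp
  have h1ηac : (1 - η) * (a + c) = a := by nlinarith [hηac]
  have hq0 : 0 < 1 - η := by nlinarith [h1ηac]
  have htplus : 0 < (1 - η) * τ := mul_pos hq0 hτ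
  -- the proximity hypothesis as a sum bound
  have hS0 : 0 ≤ ∑ i, (τ - Real.sqrt (v i * s i))^2 := by positivity
  have ht2 : ∑ i, (τ - Real.sqrt (v i * s i))^2 ≤ τ^2/2 := by
    have h1 : euclNorm (fun i => τ - Real.sqrt (v i * s i)) * Real.sqrt 2 ≤ τ := by
      rw [div_le_div_iff₀ hτ h2pos] at hξ; linarith
    have h2' : euclNorm (fun i => τ - Real.sqrt (v i * s i))
        = Real.sqrt (∑ i, (τ - Real.sqrt (v i * s i))^2) := rfl
    rw [h2'] at h1
    have h3 := mul_le_mul h1 h1 (by positivity) hτ.le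
    have h4 : (Real.sqrt (∑ i, (τ - Real.sqrt (v i * s i))^2) * Real.sqrt 2)
        * (Real.sqrt (∑ i, (τ - Real.sqrt (v i * s i))^2) * Real.sqrt 2)
        = (∑ i, (τ - Real.sqrt (v i * s i))^2) * 2 := by
      have := Real.sq_sqrt hS0
      nlinarith [this, h2]
    nlinarith [h3, h4]
  -- the vector w = d_v - d_s
  set w : Fin n ⊕ Fin n → ℝ :=
    fun i => Real.sqrt (s i / v i) * Δv i - Real.sqrt (v i / s i) * Δs i with hw_def
  -- per-index identities
  have hkey : ∀ i, (v i + Δv i) * (s i + Δs i) = τ^2 - (w i)^2/4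
      ∧ Δv i * Δs i = (τ - Real.sqrt (v i * s i))^2 - (w i)^2/4 := by
    intro i
    set A := Real.sqrt (s i / v i) with hA
    set B := Real.sqrt (v i / s i) with hB
    set β := Real.sqrt (v i * s i) with hβ
    have hvi := hv i; have hsi := hs i
    have hAB : A * B = 1 := by
      rw [hA, hB, ← Real.sqrt_mul (by positivity)]
      rw [show s i / v i * (v i / s i) = 1 by field_simp]
      exact Real.sqrt_one
    have hβB : β * B = v i := by
      rw [hβ, hB, ← Real.sqrt_mul (by positivity)]
      rw [show v i * s i * (v i / s i) = (v i)^2 by field_simp]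
      exact Real.sqrt_sq hvi.le
    have hβA : β * A = s i := by
      rw [hβ, hA, ← Real.sqrt_mul (by positivity)]
      rw [show v i * s i * (s i / v i) = (s i)^2 by field_simp]
      exact Real.sqrt_sq hsi.le
    have hβ2 : β^2 = v i * s i := Real.sq_sqrt (by positivity)
    have h5 : A * Δv i + B * Δs i = 2 * (τ - β) := heq3 i
    have hwi : w i = A * Δv i - B * Δs i := rfl
    constructor
    · rw [hwi]
      linear_combination -hβ2 - Δs i * hβB - Δv i * hβA - (Δv i * Δs i) * hAB
        + ((A * Δv i + B * Δs i)/4 + β/2 + τ/2) * h5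
    · rw [hwi]
      linear_combination -(Δv i * Δs i) * hAB
        + ((A * Δv i + B * Δs i)/4 + (τ - β)/2) * h5
  -- nonnegativity of the inner product
  have hdot : 0 ≤ ∑ i, Δv i * Δs i := by
    have hΔs : Δs = -((Omega n)ᵀ.mulVec Δz) := eq_neg_of_add_eq_zero_right heq2
    have hΩ : (Omega n).mulVec Δv = -((2*lam) • Htil.mulVec Δz) :=
      eq_neg_of_add_eq_zero_right heq1
    have h1 : ∑ i, Δv i * Δs i = Δv ⬝ᵥ Δs := rfl
    rw [h1, hΔs, dotProduct_neg, dotProduct_mulVec, vecMul_transpose, hΩ,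
      neg_dotProduct, neg_neg, smul_dotProduct, dotProduct_comm]
    have := hH.dotProduct_mulVec_nonneg Δz
    simp only [smul_eq_mul]
    positivity
  -- sum of w² bound
  have hwsum : ∑ i, (w i)^2 ≤ 2*τ^2 := by
    have h1 : ∑ i, (w i)^2
        = ∑ i, (4*(τ - Real.sqrt (v i * s i))^2 - 4*(Δv i * Δs i)) := by
      apply Finset.sum_congr rfl
      intro i _
      linear_combination 4 * (hkey i).2
    rw [h1, Finset.sum_sub_distrib, ← Finset.mul_sum, ← Finset.mul_sum]
    linarith
  have hwle : ∀ i, (w i)^2 ≤ 2*τ^2 := by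
    intro i
    exact le_trans (Finset.single_le_sum (fun j _ => sq_nonneg (w j)) (Finset.mem_univ i)) hwsum
  -- main sum bound
  set k : ℝ := (2 - Real.sqrt 2)/2 with hk_def
  have hmain : ∑ i, ((1-η)*τ - Real.sqrt ((v i + Δv i) * (s i + Δs i)))^2
      ≤ ((1-η)*τ)^2 / 2 := by
    have hstep : ∑ i, ((1-η)*τ - Real.sqrt ((v i + Δv i) * (s i + Δs i)))^2
        ≤ (2*n) * (η^2*τ^2) + ((1-η)*k - 1/4) * ∑ i, (w i)^2 := by
      have hb : ∀ i ∈ Finset.univ, ((1-η)*τ - Real.sqrt ((v i + Δv i) * (s i + Δs i)))^2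
          ≤ η^2*τ^2 + ((1-η)*k - 1/4) * (w i)^2 := by
        intro i _
        rw [(hkey i).1]
        have := chord_bound τ (1-η) ((w i)^2) hτ hq0 (sq_nonneg _) (hwle i)
        calc ((1-η)*τ - Real.sqrt (τ^2 - (w i)^2/4))^2
            ≤ (1-(1-η))^2*τ^2 + ((1-η)*((2 - Real.sqrt 2)/2) - 1/4)*(w i)^2 := this
          _ = η^2*τ^2 + ((1-η)*k - 1/4) * (w i)^2 := by rw [hk_def]; ring
      calc ∑ i, ((1-η)*τ - Real.sqrt ((v i + Δv i) * (s i + Δs i)))^2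
          ≤ ∑ i : Fin n ⊕ Fin n, (η^2*τ^2 + ((1-η)*k - 1/4) * (w i)^2) :=
            Finset.sum_le_sum hb
        _ = (2*n) * (η^2*τ^2) + ((1-η)*k - 1/4) * ∑ i, (w i)^2 := by
            rw [Finset.sum_add_distrib, Finset.sum_const, ← Finset.mul_sum,
              Finset.card_univ, Fintype.card_sum, Fintype.card_fin, nsmul_eq_mul]
            push_cast
            ring
    have hkc : k = (1 - c)/2 := by rw [hk_def, hc_def]; ring
    rcases le_or_gt ((1-η)*k) (1/4) with hcase | hcase
    · -- coefficient nonpositive: drop the w-term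
      have h1 : ((1-η)*k - 1/4) * ∑ i, (w i)^2 ≤ 0 :=
        mul_nonpos_of_nonpos_of_nonneg (by linarith) (by positivity)
      have h2' : (2*(n:ℝ)) * η^2 ≤ (1-η)^2/2 := by
        have e1 : (2*(n:ℝ))*η^2*(a+c)^2 = a^2*c^2 := by
          linear_combination 2*(n:ℝ)*(η*(a+c)+c)*hηac - c^2*h2n
        have e2 : (1-η)^2/2*(a+c)^2 = a^2/2 := by
          linear_combination (((1-η)*(a+c)+a)/2) * h1ηac
        have hcc : c^2 ≤ 1/2 := by rw [hc_def]; nlinarith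
        have h3 : (2*(n:ℝ))*η^2*(a+c)^2 ≤ (1-η)^2/2*(a+c)^2 := by
          rw [e1, e2]; exact scalar_case1 a c ha hcc
        exact le_of_mul_le_mul_right h3 (by positivity)
      have hC := mul_le_mul_of_nonneg_right h2' (sq_nonneg τ)
      have hgoal : ((1-η)*τ)^2/2 = (1-η)^2/2*τ^2 := by ring
      rw [hgoal]
      nlinarith [hstep, h1, hC]
    · -- coefficient positive: use ∑ w² ≤ 2τ²
      have h1 : ((1-η)*k - 1/4) * ∑ i, (w i)^2 ≤ ((1-η)*k - 1/4) * (2*τ^2) :=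
        mul_le_mul_of_nonneg_left hwsum (by linarith)
      have h2' : (2*(n:ℝ)) * η^2 + 2*((1-η)*k - 1/4) ≤ (1-η)^2/2 := by
        have e1 : (2*(n:ℝ))*η^2*(a+c)^2 = a^2*c^2 := by
          linear_combination 2*(n:ℝ)*(η*(a+c)+c)*hηac - c^2*h2n
        have e2 : (1-η)^2/2*(a+c)^2 = a^2/2 := by
          linear_combination (((1-η)*(a+c)+a)/2) * h1ηac
        have e3 : (1-η)*(a+c)^2 = a*(a+c) := by
          linear_combination (a+c) * h1ηac
        have h3 : ((2*(n:ℝ))*η^2 + 2*((1-η)*k - 1/4))*(a+c)^2 ≤ (1-η)^2/2*(a+c)^2 := by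
          have expand : ((2*(n:ℝ))*η^2 + 2*((1-η)*k - 1/4))*(a+c)^2
              = a^2*c^2 + 2*k*a*(a+c) - (a+c)^2/2 := by
            linear_combination e1 + 2*k*e3
          rw [expand, e2, hkc]
          exact scalar_case2 a c ha hc hc1
        exact le_of_mul_le_mul_right h3 (by positivity)
      have hC := mul_le_mul_of_nonneg_right h2' (sq_nonneg τ)
      have hgoal : ((1-η)*τ)^2/2 = (1-η)^2/2*τ^2 := by ring
      rw [hgoal]
      nlinarith [hstep, h1, hC]
  -- conclude
  have henorm : euclNorm (fun i => (1-η)*τ - Real.sqrt ((v i + Δv i) * (s i + Δs i)))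
      ≤ (1-η)*τ / Real.sqrt 2 := by
    have h0 : euclNorm (fun i => (1-η)*τ - Real.sqrt ((v i + Δv i) * (s i + Δs i)))
        = Real.sqrt (∑ i, ((1-η)*τ - Real.sqrt ((v i + Δv i) * (s i + Δs i)))^2) := rfl
    rw [h0]
    have h1 : ((1-η)*τ)^2/2 = ((1-η)*τ / Real.sqrt 2)^2 := by
      rw [div_pow, h2]
    calc Real.sqrt (∑ i, ((1-η)*τ - Real.sqrt ((v i + Δv i) * (s i + Δs i)))^2)
        ≤ Real.sqrt (((1-η)*τ / Real.sqrt 2)^2) := Real.sqrt_le_sqrt (by rw [← h1]; exact hmain)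
      _ = (1-η)*τ / Real.sqrt 2 := Real.sqrt_sq (by positivity)
  rw [div_le_div_iff₀ htplus h2pos]
  calc euclNorm (fun i => (1-η)*τ - Real.sqrt ((v i + Δv i) * (s i + Δs i))) * Real.sqrt 2
      ≤ ((1-η)*τ / Real.sqrt 2) * Real.sqrt 2 := by
        exact mul_le_mul_of_nonneg_right henorm h2pos.le
    _ = (1-η)*τ := by field_simp
    _ = 1 * ((1-η)*τ) := by ring
end

section
/- Let n ≥ 1 be an integer, let h̃ ∈ ℝⁿ satisfy ‖h̃‖∞ = 1, and set λ = 1/√(n+1). Define the initial point v⁰ = col(1 − λh̃, 1 + λh̃) ∈ ℝ^{2n} and s⁰ = e ∈ ℝ^{2n}, and β⁰ = √(v⁰s⁰). Then the initial proximity measure satisfies ξ(β⁰, 1) = ‖e − √(v⁰)‖ ≤ 1/√2. -/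
open Finset Real

lemma sqrt_lb (t : ℝ) (h0 : 0 ≤ t) (h1 : t ≤ 1/2) :
    1 - t/2 - t^2/4 ≤ Real.sqrt (1 - t) := by
  have hx : (0:ℝ) ≤ 1 - t/2 - t^2/4 := by nlinarith
  have ht3 : t^3 ≤ t^2/2 := by nlinarith [sq_nonneg t]
  have ht4 : t^4 ≤ t^2/4 := by nlinarith [sq_nonneg t, sq_nonneg (t^2)]
  rw [← Real.sqrt_sq hx]
  apply Real.sqrt_le_sqrt
  nlinarith [sq_nonneg t]

lemma pair_bound (u : ℝ) (hu : u^2 ≤ 1/2) :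
    (1 - Real.sqrt (1-u))^2 + (1 - Real.sqrt (1+u))^2 ≤ u^2/2 + u^4/2 := by
  have hu1 : -1 ≤ u ∧ u ≤ 1 := by constructor <;> nlinarith
  have h1 : (0:ℝ) ≤ 1 - u := by linarith [hu1.2]
  have h2 : (0:ℝ) ≤ 1 + u := by linarith [hu1.1]
  set a := Real.sqrt (1-u) with ha
  set b := Real.sqrt (1+u) with hb
  have ha2 : a^2 = 1 - u := Real.sq_sqrt h1
  have hb2 : b^2 = 1 + u := Real.sq_sqrt h2
  have hab : a * b = Real.sqrt (1 - u^2) := by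
    rw [ha, hb, ← Real.sqrt_mul h1]; ring_nf
  have hst : 1 - u^2/2 - (u^2)^2/4 ≤ Real.sqrt (1 - u^2) :=
    sqrt_lb (u^2) (sq_nonneg u) hu
  have ha0 : 0 ≤ a := Real.sqrt_nonneg _
  have hb0 : 0 ≤ b := Real.sqrt_nonneg _
  have hS : 2 - u^2/4 - u^4/4 ≤ a + b := by
    have ht3 : (u^2)^3 ≤ (u^2)^2/2 := by nlinarith [sq_nonneg u, sq_nonneg (u^2)]
    have ht4 : (u^2)^4 ≤ (u^2)^2/4 := by
      nlinarith [sq_nonneg u, sq_nonneg (u^2), sq_nonneg ((u^2)^2)]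
    have hS2 : (2 - u^2/4 - u^4/4)^2 ≤ (a+b)^2 := by
      have hE : (a+b)^2 = 2 + 2 * (a*b) := by
        have : (a+b)^2 = a^2 + b^2 + 2*(a*b) := by ring
        rw [this, ha2, hb2]; ring
      rw [hE, hab]
      nlinarith [hst, sq_nonneg u, sq_nonneg (u^2)]
    have hpos : (0:ℝ) ≤ 2 - u^2/4 - u^4/4 := by
      nlinarith [hu, sq_nonneg (u^2)]
    have := Real.sqrt_le_sqrt hS2
    rwa [Real.sqrt_sq hpos, Real.sqrt_sq (add_nonneg ha0 hb0)] at this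
  have hexp : (1-a)^2 + (1-b)^2 = 4 - 2*(a+b) := by
    linear_combination ha2 + hb2
  rw [hexp]; linarith

/-- The initial point v⁰ = col(1 − λh̃, 1 + λh̃), s⁰ = e with λ = 1/√(n+1)
    satisfies ξ(β⁰, 1) = ‖e − √(v⁰)‖ ≤ 1/√2 (Lemma 6). -/
theorem initial_proximity_measure
    (n : ℕ) (hn : 1 ≤ n)
    (h : Fin n → ℝ) (hinf : (⨆ i, |h i|) = 1)
    (lam : ℝ) (hlam : lam = 1 / Real.sqrt (n + 1))
    (v0 : Fin n ⊕ Fin n → ℝ)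
    (hv0 : v0 = Sum.elim (fun i => 1 - lam * h i) (fun i => 1 + lam * h i))
    (s0 : Fin n ⊕ Fin n → ℝ) (hs0 : s0 = fun _ => 1) :
    _root_.enorm (fun j => 1 - Real.sqrt (v0 j * s0 j)) / 1
        = _root_.enorm (fun j => 1 - Real.sqrt (v0 j)) ∧
    _root_.enorm (fun j => 1 - Real.sqrt (v0 j)) ≤ 1 / Real.sqrt 2 := by
  have hnp : (0:ℝ) < (n:ℝ) + 1 := by positivity
  have hlam2 : lam^2 = 1 / ((n:ℝ)+1) := by
    rw [hlam, div_pow, one_pow, Real.sq_sqrt (le_of_lt hnp)]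
  have hbd : ∀ i, |h i| ≤ 1 := by
    intro i
    rw [← hinf]
    exact le_ciSup (f := fun i => |h i|) (Set.Finite.bddAbove (Set.finite_range _)) i
  have hh2 : ∀ i, (h i)^2 ≤ 1 := by
    intro i
    have := hbd i
    nlinarith [abs_nonneg (h i), sq_abs (h i)]
  constructor
  · rw [div_one, hs0]; simp
  · have hsum : ∑ j, (1 - Real.sqrt (v0 j))^2 ≤ 1/2 := by
      rw [hv0, Fintype.sum_sum_type]
      simp only [Sum.elim_inl, Sum.elim_inr]
      have hn1 : (1:ℝ) ≤ (n:ℝ) := by exact_mod_cast hn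
      have hl2 : lam^2 ≤ 1/2 := by
        rw [hlam2, div_le_div_iff₀ hnp (by norm_num)]
        linarith
      have hbound : ∀ i : Fin n,
          (1 - Real.sqrt (1 - lam * h i))^2 + (1 - Real.sqrt (1 + lam * h i))^2
            ≤ lam^2/2 + lam^4/2 := by
        intro i
        have hu2 : (lam * h i)^2 ≤ lam^2 := by
          have := hh2 i
          nlinarith [sq_nonneg lam]
        have := pair_bound (lam * h i) (le_trans hu2 hl2)
        have h4 : (lam * h i)^4 ≤ lam^4 := by
          nlinarith [sq_nonneg (lam * h i), sq_nonneg lam, hu2]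
        nlinarith
      calc (∑ i : Fin n, (1 - Real.sqrt (1 - lam * h i))^2)
            + ∑ i : Fin n, (1 - Real.sqrt (1 + lam * h i))^2
          = ∑ i : Fin n, ((1 - Real.sqrt (1 - lam * h i))^2
              + (1 - Real.sqrt (1 + lam * h i))^2) := by rw [Finset.sum_add_distrib]
        _ ≤ ∑ i : Fin n, (lam^2/2 + lam^4/2) := Finset.sum_le_sum (fun i _ => hbound i)
        _ = n * (lam^2/2 + lam^4/2) := by
            rw [Finset.sum_const, card_univ, Fintype.card_fin, nsmul_eq_mul]
        _ ≤ 1/2 := by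
            have h4 : lam^4 = (lam^2)^2 := by ring
            rw [h4, hlam2,
              show 1/((n:ℝ)+1)/2 + (1/((n:ℝ)+1))^2/2 = ((n:ℝ)+2)/(2*((n:ℝ)+1)^2) by
                field_simp; ring]
            rw [mul_div_assoc', div_le_div_iff₀ (by positivity) (by norm_num)]
            nlinarith
    unfold _root_.enorm
    calc Real.sqrt (∑ j, (1 - Real.sqrt (v0 j))^2) ≤ Real.sqrt (1/2) :=
          Real.sqrt_le_sqrt hsum
      _ = 1 / Real.sqrt 2 := by
          rw [one_div, Real.sqrt_inv, one_div]
end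

section
/- Let n ≥ 1, λ > 0, τ > 0, H̃ ∈ ℝ^{n×n}, and let γ, θ, φ, ψ ∈ ℝⁿ have all components positive; set v = col(γ, θ) and s = col(φ, ψ) in ℝ^{2n}. Suppose Δz ∈ ℝⁿ solves the compact Newton system (2λH̃ + diag(γ/φ) + diag(θ/ψ))Δz = 2(√(θ/ψ)τe − √(γ/φ)τe + γ − θ), and define Δγ = (γ/φ)Δz + 2(√(γ/φ)τe − γ), Δθ = −(θ/ψ)Δz + 2(√(θ/ψ)τe − θ), Δφ = −Δz, Δψ = Δz. Then (Δz, Δv, Δs) with Δv = col(Δγ, Δθ) and Δs = col(Δφ, Δψ) satisfies the full Newton system: 2λH̃Δz + ΩΔv = 0, ΩᵀΔz + Δs = 0, and √(s/v)Δv + √(v/s)Δs = 2(τe − √(vs)), where Ω = [I, −I] ∈ ℝ^{n×2n}. -/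
open Finset Matrix Real

lemma sqrt_key (a b t z : ℝ) (ha : 0 < a) (hb : 0 < b) :
    Real.sqrt (b / a) * ((a / b) * z + 2 * (Real.sqrt (a / b) * t - a))
      + Real.sqrt (a / b) * (-z) = 2 * (t - Real.sqrt (a * b)) := by
  have hsa := Real.sqrt_pos.2 ha
  have hsb := Real.sqrt_pos.2 hb
  have hab : Real.sqrt (a / b) = Real.sqrt a / Real.sqrt b := Real.sqrt_div ha.le b
  have hba : Real.sqrt (b / a) = Real.sqrt b / Real.sqrt a := Real.sqrt_div hb.le a
  have hprod : Real.sqrt (a * b) = Real.sqrt a * Real.sqrt b := Real.sqrt_mul ha.le b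
  have hqa : Real.sqrt a * Real.sqrt a = a := Real.mul_self_sqrt ha.le
  have hqb : Real.sqrt b * Real.sqrt b = b := Real.mul_self_sqrt hb.le
  have e1 : Real.sqrt b / Real.sqrt a * (a / b) = Real.sqrt a / Real.sqrt b := by
    field_simp; linear_combination a * hqb - b * hqa
  have e2 : Real.sqrt b / Real.sqrt a * (Real.sqrt a / Real.sqrt b) = 1 := by
    field_simp
  have e3 : Real.sqrt b / Real.sqrt a * a = Real.sqrt a * Real.sqrt b := by
    rw [div_mul_eq_mul_div, div_eq_iff hsa.ne']; linear_combination (-Real.sqrt b) * hqa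
  rw [hab, hba, hprod]
  linear_combination z * e1 + (2 * t) * e2 - 2 * e3

/-- A solution of the compact Newton system, together with the back-substitution
    formulas for (Δγ, Δθ, Δφ, Δψ), solves the full Newton system. -/
theorem compact_newton_solves_full_system
    (n : ℕ) (hn : 1 ≤ n)
    (lam : ℝ) (hlam : 0 < lam) (τ : ℝ) (hτ : 0 < τ)
    (Htil : Matrix (Fin n) (Fin n) ℝ)
    (γ θ φ ψ : Fin n → ℝ)
    (hγ : ∀ i, 0 < γ i) (hθ : ∀ i, 0 < θ i)
    (hφ : ∀ i, 0 < φ i) (hψ : ∀ i, 0 < ψ i)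
    (v s : Fin n ⊕ Fin n → ℝ)
    (hv : v = Sum.elim γ θ) (hs : s = Sum.elim φ ψ)
    (Δz : Fin n → ℝ)
    (hΔz : ((2 * lam) • Htil + Matrix.diagonal (fun i => γ i / φ i)
              + Matrix.diagonal (fun i => θ i / ψ i)).mulVec Δz
           = fun i => 2 * (Real.sqrt (θ i / ψ i) * τ - Real.sqrt (γ i / φ i) * τ
                            + γ i - θ i))
    (Δγ Δθ Δφ Δψ : Fin n → ℝ)
    (hΔγ : Δγ = fun i => (γ i / φ i) * Δz i + 2 * (Real.sqrt (γ i / φ i) * τ - γ i))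
    (hΔθ : Δθ = fun i => -(θ i / ψ i) * Δz i + 2 * (Real.sqrt (θ i / ψ i) * τ - θ i))
    (hΔφ : Δφ = fun i => -Δz i)
    (hΔψ : Δψ = fun i => Δz i)
    (Δv Δs : Fin n ⊕ Fin n → ℝ)
    (hΔv : Δv = Sum.elim Δγ Δθ) (hΔs : Δs = Sum.elim Δφ Δψ) :
    ((2 * lam) • Htil.mulVec Δz + (Omega n).mulVec Δv = 0) ∧
    ((Omega n)ᵀ.mulVec Δz + Δs = 0) ∧
    (∀ i, Real.sqrt (s i / v i) * Δv i + Real.sqrt (v i / s i) * Δs i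
            = 2 * (τ - Real.sqrt (v i * s i))) := by
  have hpt : ∀ i, 2 * lam * ((Htil.mulVec Δz) i) + (γ i / φ i) * Δz i
      + (θ i / ψ i) * Δz i
      = 2 * (Real.sqrt (θ i / ψ i) * τ - Real.sqrt (γ i / φ i) * τ + γ i - θ i) := by
    intro i
    have := congrFun hΔz i
    simpa [Matrix.add_mulVec, Matrix.smul_mulVec, Matrix.mulVec_diagonal,
      Pi.add_apply, Pi.smul_apply, smul_eq_mul] using this
  refine ⟨?_, ?_, ?_⟩
  · funext i
    have h1 : (Omega n).mulVec Δv = Δγ - Δθ := by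
      rw [Omega, hΔv, Matrix.fromCols_mulVec_sumElim]
      simp [Matrix.neg_mulVec, sub_eq_add_neg]
    rw [h1]
    have := hpt i
    simp only [Pi.add_apply, Pi.smul_apply, Pi.sub_apply, Pi.zero_apply, smul_eq_mul,
      hΔγ, hΔθ]
    linarith
  · funext i
    have h1 : (Omega n)ᵀ.mulVec Δz = Sum.elim Δz (-Δz) := by
      rw [Omega, Matrix.transpose_fromCols, Matrix.fromRows_mulVec]
      simp [Matrix.neg_mulVec]
    rw [h1, hΔs, hΔφ, hΔψ]
    cases i <;> simp
  · intro i
    cases i with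
    | inl j =>
      simp only [hv, hs, hΔv, hΔs, hΔγ, hΔφ, Sum.elim_inl]
      exact sqrt_key (γ j) (φ j) τ (Δz j) (hγ j) (hφ j)
    | inr j =>
      simp only [hv, hs, hΔv, hΔs, hΔθ, hΔψ, Sum.elim_inr]
      have := sqrt_key (θ j) (ψ j) τ (-Δz j) (hθ j) (hψ j)
      rw [neg_neg] at this
      linarith
end
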